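/- Let T ∈ ℝ^{n×n} be a tridiagonal matrix with zero diagonal, subdiagonal entries aᵢ = (i−1)/(2i−1)·α (for i = 2,…,n) and superdiagonal entries cᵢ = (i+2)/(2i+3)·α (for i = 1,…,n−1), where α ≠ 0. Then all eigenvalues of T are real and of the form b·α for real numbers b, and they are pairwise distinct. -/

import Mathlib

open Polynomial Matrix


/-- The tridiagonal matrix `A₂` of the HSWME: zero diagonal, subdiagonal entries
`aᵢ = (i−1)/(2i−1)·α` (rows `i = 2,…,n`, 1-indexed) and superdiagonal entries
`cᵢ = (i+2)/(2i+3)·α` (rows `i = 1,…,n−1`, 1-indexed). -/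
noncomputable def A2mat (n : ℕ) (α : ℝ) : Matrix (Fin n) (Fin n) ℝ :=
  Matrix.of fun i j =>
    if (j : ℕ) = (i : ℕ) + 1 then (((i : ℕ) : ℝ) + 3) / (2 * ((i : ℕ) : ℝ) + 5) * α
    else if (i : ℕ) = (j : ℕ) + 1 then (((j : ℕ) : ℝ) + 1) / (2 * ((j : ℕ) : ℝ) + 3) * α
    else 0


/-- Conjugation invariance of the characteristic polynomial. -/
lemma charpoly_conj' {n : Type*} [Fintype n] [DecidableEq n] {R : Type*} [CommRing R]
    (P Q M : Matrix n n R) (h1 : P * Q = 1) :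
    (P * M * Q).charpoly = M.charpoly := by
  have hcm : charmatrix (P * M * Q) = P.map C * charmatrix M * Q.map C := by
    unfold charmatrix
    rw [mul_sub, sub_mul]
    congr 1
    · symm
      have hc : Commute (Matrix.scalar n (X : R[X])) (Q.map C) :=
        Matrix.scalar_commute _ (fun r' => Commute.all _ _) _
      calc P.map C * Matrix.scalar n (X : R[X]) * Q.map C
          = P.map C * Q.map C * Matrix.scalar n (X : R[X]) := by
            rw [mul_assoc, hc.eq, ← mul_assoc]
        _ = Matrix.scalar n (X : R[X]) := by
            rw [← Matrix.map_mul, h1, Matrix.map_one _ (map_zero C) (map_one C), one_mul]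
    · simp [RingHom.mapMatrix_apply, Matrix.map_mul]
  have hdet : (P.map C).det * (Q.map C).det = 1 := by
    rw [← det_mul, ← Matrix.map_mul, h1, Matrix.map_one _ (map_zero C) (map_one C), det_one]
  unfold Matrix.charpoly
  rw [hcm, det_mul, det_mul]
  calc (P.map C).det * (charmatrix M).det * (Q.map C).det = (charmatrix M).det * ((P.map C).det * (Q.map C).det) := by ring
    _ = (charmatrix M).det := by rw [hdet, mul_one]

lemma charpoly_diagonal' {n : Type*} [Fintype n] [DecidableEq n] {R : Type*} [CommRing R]
    (v : n → R) : (Matrix.diagonal v).charpoly = ∏ i, (X - C (v i)) := by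
  have h : charmatrix (Matrix.diagonal v) = Matrix.diagonal fun i => X - C (v i) := by
    ext i j
    by_cases hij : i = j
    · subst hij; simp
    · rw [charmatrix_apply_ne _ _ _ hij, Matrix.diagonal_apply_ne _ hij,
        Matrix.diagonal_apply_ne _ hij, map_zero, neg_zero]
  rw [Matrix.charpoly, h, Matrix.det_diagonal]

/-- The diagonal scaling sequence symmetrizing `A₂`. -/
noncomputable def dseq : ℕ → ℝ
  | 0 => 1
  | (k + 1) => dseq k * Real.sqrt (((k : ℝ) + 1) * (2 * k + 5) / ((2 * k + 3) * ((k : ℝ) + 3)))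

lemma rpos (k : ℕ) : 0 < ((k : ℝ) + 1) * (2 * k + 5) / ((2 * k + 3) * ((k : ℝ) + 3)) := by
  positivity

lemma dseq_pos : ∀ k, 0 < dseq k
  | 0 => one_pos
  | (k + 1) => mul_pos (dseq_pos k) (Real.sqrt_pos.mpr (rpos k))

lemma dseq_ne (k : ℕ) : dseq k ≠ 0 := (dseq_pos k).ne'

/-- Key arithmetic identity: `c_k · r_k = a_{k+1}`. -/
lemma key_arith (k : ℕ) :
    (((k : ℝ) + 3) / (2 * k + 5)) * (((k : ℝ) + 1) * (2 * k + 5) / ((2 * k + 3) * ((k : ℝ) + 3)))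
      = ((k : ℝ) + 1) / (2 * k + 3) := by
  have h1 : (2 * (k : ℝ) + 5) ≠ 0 := by positivity
  have h2 : (2 * (k : ℝ) + 3) ≠ 0 := by positivity
  have h3 : ((k : ℝ) + 3) ≠ 0 := by positivity
  field_simp

/-- Symmetry of the scaled entries. -/
lemma entry_symm (α : ℝ) (k : ℕ) :
    (dseq k)⁻¹ * (((k : ℝ) + 3) / (2 * k + 5) * α) * dseq (k + 1)
      = (dseq (k + 1))⁻¹ * (((k : ℝ) + 1) / (2 * k + 3) * α) * dseq k := by
  have hrp := rpos k
  set r : ℝ := ((k : ℝ) + 1) * (2 * k + 5) / ((2 * k + 3) * ((k : ℝ) + 3)) with hr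
  have hs : 0 < Real.sqrt r := Real.sqrt_pos.mpr hrp
  have hsq : Real.sqrt r * Real.sqrt r = r := Real.mul_self_sqrt hrp.le
  have hd := dseq_ne k
  set c : ℝ := ((k : ℝ) + 3) / (2 * k + 5) with hc
  set a : ℝ := ((k : ℝ) + 1) / (2 * k + 3) with ha
  have hdk1 : dseq (k + 1) = dseq k * Real.sqrt r := rfl
  set s : ℝ := Real.sqrt r with hss
  rw [hdk1]
  have h1 : (dseq k)⁻¹ * (c * α) * (dseq k * s) = c * α * s := by
    field_simp
  have h2 : (dseq k * s)⁻¹ * (a * α) * dseq k = a * α * s⁻¹ := by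
    rw [mul_inv]
    field_simp
  rw [h1, h2]
  have hcar : c * r = a := key_arith k
  calc c * α * s = c * α * s * (s * s⁻¹) := by rw [mul_inv_cancel₀ hs.ne', mul_one]
    _ = c * α * (s * s) * s⁻¹ := by ring
    _ = a * α * s⁻¹ := by rw [hsq]; rw [show c * α * r = a * α from by rw [← hcar]; ring]

/-- The symmetrized version of `A₂`. -/
noncomputable def Smat (n : ℕ) (α : ℝ) : Matrix (Fin n) (Fin n) ℝ :=
  Matrix.of fun i j => (dseq (i : ℕ))⁻¹ * A2mat n α i j * dseq (j : ℕ)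

lemma Smat_apply (n : ℕ) (α : ℝ) (i j : Fin n) :
    Smat n α i j = (dseq (i : ℕ))⁻¹ * A2mat n α i j * dseq (j : ℕ) := rfl

lemma A2mat_apply_other (n : ℕ) (α : ℝ) (i j : Fin n) (h1 : (j : ℕ) ≠ (i : ℕ) + 1)
    (h2 : (i : ℕ) ≠ (j : ℕ) + 1) : A2mat n α i j = 0 := by
  simp [A2mat, h1, h2]

lemma Smat_apply_other (n : ℕ) (α : ℝ) (i j : Fin n) (h1 : (j : ℕ) ≠ (i : ℕ) + 1)
    (h2 : (i : ℕ) ≠ (j : ℕ) + 1) : Smat n α i j = 0 := by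
  rw [Smat_apply, A2mat_apply_other n α i j h1 h2, mul_zero, zero_mul]

lemma Smat_apply_succ (n : ℕ) (α : ℝ) (i j : Fin n) (h : (j : ℕ) = (i : ℕ) + 1) :
    Smat n α i j = (dseq (i : ℕ))⁻¹ * ((((i : ℕ) : ℝ) + 3) / (2 * ((i : ℕ) : ℝ) + 5) * α)
      * dseq ((i : ℕ) + 1) := by
  rw [Smat_apply, h]
  congr 2
  simp [A2mat, h]

lemma Smat_apply_succ_ne (n : ℕ) (α : ℝ) (hα : α ≠ 0) (i j : Fin n)
    (h : (j : ℕ) = (i : ℕ) + 1) : Smat n α i j ≠ 0 := by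
  rw [Smat_apply_succ n α i j h]
  have h1 : (dseq (i : ℕ))⁻¹ ≠ 0 := inv_ne_zero (dseq_ne _)
  have h2 : (((i : ℕ) : ℝ) + 3) / (2 * ((i : ℕ) : ℝ) + 5) ≠ 0 := by positivity
  exact mul_ne_zero (mul_ne_zero h1 (mul_ne_zero h2 hα)) (dseq_ne _)

lemma Smat_symm (n : ℕ) (α : ℝ) (i j : Fin n) : Smat n α j i = Smat n α i j := by
  rcases eq_or_ne ((j : ℕ)) ((i : ℕ) + 1) with h | h
  · rw [Smat_apply_succ n α i j h, Smat_apply, show A2mat n α j i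
      = (((i : ℕ) : ℝ) + 1) / (2 * ((i : ℕ) : ℝ) + 3) * α from by
        simp only [A2mat, Matrix.of_apply]; rw [if_neg (by omega), if_pos h]]
    rw [h]
    exact (entry_symm α (i : ℕ)).symm
  · rcases eq_or_ne ((i : ℕ)) ((j : ℕ) + 1) with h' | h'
    · rw [Smat_apply_succ n α j i h', Smat_apply, show A2mat n α i j
        = (((j : ℕ) : ℝ) + 1) / (2 * ((j : ℕ) : ℝ) + 3) * α from by
          simp only [A2mat, Matrix.of_apply]; rw [if_neg (by omega), if_pos h'], h']
      exact entry_symm α (j : ℕ)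
    · rw [Smat_apply_other n α i j h h', Smat_apply_other n α j i h' h]

/-- The complexified symmetrized matrix is Hermitian. -/
lemma Smat_isHermitian (n : ℕ) (α : ℝ) :
    ((Smat n α).map (fun x : ℝ => (x : ℂ))).IsHermitian := by
  ext i j
  simp only [Matrix.conjTranspose_apply, Matrix.map_apply, Complex.star_def,
    Complex.conj_ofReal]
  rw [Smat_symm]

/-- An eigenvector of the complexified `Smat` vanishing at index 0 is zero. -/
lemma Smat_ker_eq_zero (n : ℕ) (α : ℝ) (hα : α ≠ 0) (μ : ℂ) (x : Fin n → ℂ)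
    (hx : ((Smat n α).map (fun x : ℝ => (x : ℂ))) *ᵥ x = μ • x)
    (h0 : ∀ i : Fin n, (i : ℕ) = 0 → x i = 0) : x = 0 := by
  set Sc := (Smat n α).map (fun x : ℝ => (x : ℂ)) with hSc
  have key : ∀ k : ℕ, ∀ h : k < n, x ⟨k, h⟩ = 0 := by
    intro k
    induction k using Nat.strong_induction_on with
    | _ k ih =>
      intro h
      match k, ih, h with
      | 0, ih, h => exact h0 ⟨0, h⟩ rfl
      | (m + 1), ih, h =>
        have hm : m < n := lt_trans (Nat.lt_succ_self m) h
        have hrow := congrFun hx ⟨m, hm⟩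
        have hxm : x ⟨m, hm⟩ = 0 := ih m (Nat.lt_succ_self m) hm
        have hsum : (Sc *ᵥ x) ⟨m, hm⟩ = Sc ⟨m, hm⟩ ⟨m + 1, h⟩ * x ⟨m + 1, h⟩ := by
          rw [Matrix.mulVec, dotProduct]
          apply Finset.sum_eq_single
          · intro j _ hj
            rcases eq_or_ne ((j : ℕ)) (m + 1) with hj1 | hj1
            · exact absurd (Fin.ext hj1) hj
            · rcases eq_or_ne (m : ℕ) ((j : ℕ) + 1) with hj2 | hj2
              · have : x j = 0 := by
                  have hjm : (j : ℕ) < m + 1 := by omega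
                  have := ih (j : ℕ) hjm j.isLt
                  simpa using this
                rw [this, mul_zero]
              · rw [hSc, Matrix.map_apply, Smat_apply_other n α _ _ hj1 hj2,
                  Complex.ofReal_zero, zero_mul]
          · intro hmem
            exact absurd (Finset.mem_univ _) hmem
        rw [hsum] at hrow
        have hμ : μ • x = fun i => μ * x i := rfl
        have hrhs : (μ • x) ⟨m, hm⟩ = 0 := by
          rw [hμ]
          simp [hxm]
        rw [hrhs] at hrow
        have hne : Sc ⟨m, hm⟩ ⟨m + 1, h⟩ ≠ 0 := by
          rw [hSc, Matrix.map_apply, Complex.ofReal_ne_zero]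
          exact Smat_apply_succ_ne n α hα _ _ rfl
        exact (mul_eq_zero.mp hrow).resolve_left hne
  funext i
  have := key (i : ℕ) i.isLt
  simpa using this

open scoped ComplexInnerProductSpace in
/-- The eigenvalues of the symmetrized matrix are pairwise distinct. -/
lemma Smat_eigenvalues_injective (n : ℕ) (α : ℝ) (hα : α ≠ 0) :
    Function.Injective (Smat_isHermitian n α).eigenvalues := by
  set hS := Smat_isHermitian n α
  intro i j hij
  by_contra hne
  set Sc := (Smat n α).map (fun x : ℝ => (x : ℂ)) with hScdef
  have hpos : 0 < n := i.pos
  set i0 : Fin n := ⟨0, hpos⟩ with hi0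
  set u : Fin n → ℂ := ⇑(hS.eigenvectorBasis i) with hu
  set v : Fin n → ℂ := ⇑(hS.eigenvectorBasis j) with hv
  set μ : ℂ := ((hS.eigenvalues i : ℝ) : ℂ) with hμ
  have hmu : Sc *ᵥ u = μ • u := by
    rw [hu, hS.mulVec_eigenvectorBasis i]
    funext k
    simp [Complex.real_smul]
    exact Or.inl rfl
  have hmv : Sc *ᵥ v = μ • v := by
    rw [hv, hS.mulVec_eigenvectorBasis j, ← hij]
    funext k
    simp [Complex.real_smul]
    exact Or.inl rfl
  have hnzi : u ≠ 0 := by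
    intro h
    have hz : hS.eigenvectorBasis i = 0 := by
      apply PiLp.ext
      intro k
      exact congrFun h k
    have := hS.eigenvectorBasis.orthonormal.1 i
    rw [hz, norm_zero] at this
    exact one_ne_zero this.symm
  have hnzj : v ≠ 0 := by
    intro h
    have hz : hS.eigenvectorBasis j = 0 := by
      apply PiLp.ext
      intro k
      exact congrFun h k
    have := hS.eigenvectorBasis.orthonormal.1 j
    rw [hz, norm_zero] at this
    exact one_ne_zero this.symm
  -- consider w = v i0 • u - u i0 • v
  have hw : Sc *ᵥ (v i0 • u - u i0 • v) = μ • (v i0 • u - u i0 • v) := by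
    rw [Matrix.mulVec_sub, Matrix.mulVec_smul, Matrix.mulVec_smul, hmu, hmv,
      smul_sub, smul_comm μ (v i0), smul_comm μ (u i0)]
  have hw0 : ∀ k : Fin n, (k : ℕ) = 0 → (v i0 • u - u i0 • v) k = 0 := by
    intro k hk
    have : k = i0 := Fin.ext hk
    subst this
    simp [mul_comm]
  have hwz : v i0 • u - u i0 • v = 0 := Smat_ker_eq_zero n α hα μ _ hw hw0
  have heq : v i0 • u = u i0 • v := sub_eq_zero.mp hwz
  -- u i0 ≠ 0, else u = 0
  have hui0 : u i0 ≠ 0 := by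
    intro h
    apply hnzi
    apply Smat_ker_eq_zero n α hα μ u hmu
    intro k hk
    have : k = i0 := Fin.ext hk
    rw [this, h]
  -- v = c • u
  set c : ℂ := (u i0)⁻¹ * v i0 with hc
  have hvc : hS.eigenvectorBasis j = c • hS.eigenvectorBasis i := by
    apply PiLp.ext
    intro k
    have h1 := congrFun heq k
    simp only [Pi.smul_apply, smul_eq_mul] at h1
    show v k = c * u k
    apply mul_left_cancel₀ hui0
    rw [hc, ← mul_assoc, ← mul_assoc, mul_inv_cancel₀ hui0, one_mul, h1]
  have horthij : ⟪hS.eigenvectorBasis i, hS.eigenvectorBasis j⟫ = 0 :=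
    hS.eigenvectorBasis.orthonormal.2 hne
  rw [hvc, inner_smul_right] at horthij
  have hii : ⟪hS.eigenvectorBasis i, hS.eigenvectorBasis i⟫ = 1 := by
    rw [inner_self_eq_norm_sq_to_K, hS.eigenvectorBasis.orthonormal.1 i]
    norm_num
  rw [hii, mul_one] at horthij
  have : v i0 = 0 := by
    rw [hc] at horthij
    field_simp at horthij
    simpa using horthij
  apply hnzj
  apply Smat_ker_eq_zero n α hα μ v hmv
  intro k hk
  have hki : k = i0 := Fin.ext hk
  rw [hki, this]

lemma A2_charpoly_eq (n : ℕ) (α : ℝ) :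
    ((A2mat n α).map (fun x : ℝ => (x : ℂ))).charpoly =
      ∏ i, (X - C (((Smat_isHermitian n α).eigenvalues i : ℝ) : ℂ)) := by
  set hS := Smat_isHermitian n α
  set Sc := (Smat n α).map (fun x : ℝ => (x : ℂ)) with hScdef
  set Dc : Matrix (Fin n) (Fin n) ℂ := Matrix.diagonal (fun i : Fin n => ((dseq (i : ℕ) : ℝ) : ℂ))
    with hDc
  set Dcinv : Matrix (Fin n) (Fin n) ℂ :=
    Matrix.diagonal (fun i : Fin n => ((dseq (i : ℕ) : ℝ) : ℂ)⁻¹) with hDcinv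
  have hne : ∀ k : ℕ, ((dseq k : ℝ) : ℂ) ≠ 0 := fun k =>
    Complex.ofReal_ne_zero.mpr (dseq_ne k)
  have hDD : Dc * Dcinv = 1 := by
    rw [hDc, hDcinv, Matrix.diagonal_mul_diagonal]
    have hfun : (fun i : Fin n => ((dseq (i : ℕ) : ℝ) : ℂ) * ((dseq (i : ℕ) : ℝ) : ℂ)⁻¹)
        = fun _ => 1 := by
      funext k
      exact mul_inv_cancel₀ (hne _)
    rw [hfun, Matrix.diagonal_one]
  have hA2 : (A2mat n α).map (fun x : ℝ => (x : ℂ)) = Dc * Sc * Dcinv := by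
    ext i j
    rw [hDc, hDcinv, Matrix.mul_diagonal, Matrix.diagonal_mul]
    rw [hScdef, Matrix.map_apply, Matrix.map_apply, Smat_apply]
    push_cast
    have h1 := hne (i : ℕ)
    have h2 := hne (j : ℕ)
    field_simp
  rw [hA2, charpoly_conj' Dc Dcinv Sc hDD]
  have hspec := hS.spectral_theorem
  rw [hspec, Unitary.conjStarAlgAut_apply, charpoly_conj' _ _ _ ((Matrix.mem_unitaryGroup_iff).mp (hS.eigenvectorUnitary).2),
    charpoly_diagonal']
  rfl


/-- For `α ≠ 0`, all eigenvalues of `A₂` are real, of the form `b·α`, and pairwise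
distinct. -/
theorem A2_eigenvalues_real_distinct (n : ℕ) (α : ℝ) (hα : α ≠ 0) :
    ((A2mat n α).map (fun x : ℝ => (x : ℂ))).charpoly.roots.Nodup ∧
      ∀ μ ∈ ((A2mat n α).map (fun x : ℝ => (x : ℂ))).charpoly.roots,
        ∃ b : ℝ, μ = ((b * α : ℝ) : ℂ) := by
  have hroots : ((A2mat n α).map (fun x : ℝ => (x : ℂ))).charpoly.roots =
      Finset.univ.val.map (fun i => (((Smat_isHermitian n α).eigenvalues i : ℝ) : ℂ)) := by
    rw [A2_charpoly_eq n α]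
    rw [Polynomial.roots_prod _ _ (Polynomial.monic_prod_of_monic _ _
      (fun i _ => Polynomial.monic_X_sub_C _)).ne_zero]
    simp only [Polynomial.roots_X_sub_C]
    exact Multiset.bind_singleton _ _
  constructor
  · rw [hroots]
    exact Finset.univ.nodup.map
      (Complex.ofReal_injective.comp (Smat_eigenvalues_injective n α hα))
  · intro μ hμ
    rw [hroots] at hμ
    obtain ⟨i, _, hi⟩ := Multiset.mem_map.mp hμ
    refine ⟨(Smat_isHermitian n α).eigenvalues i / α, ?_⟩
    rw [div_mul_cancel₀ _ hα, hi]
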